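/- Let E ⊆ ℤ^p be a good semigroup ideal. If for some α ∈ ℤ^p and every J ⊆ {1,…,p} with |J| ≥ 2 one has Δ_J(α,E) ≠ ∅, then α ∈ E. -/

import Mathlib

open Finset

def DeltaJ {p : ℕ} (J : Finset (Fin p)) (α : Fin p → ℤ) (E : Set (Fin p → ℤ)) :
    Set (Fin p → ℤ) :=
  {v | v ∈ E ∧ (∀ j ∈ J, v j = α j) ∧ ∀ j ∉ J, α j < v j}

def Delta {p : ℕ} (α : Fin p → ℤ) (E : Set (Fin p → ℤ)) : Set (Fin p → ℤ) :=
  ⋃ i : Fin p, DeltaJ {i} α E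

def GoodIdeal {p : ℕ} (E : Set (Fin p → ℤ)) : Prop :=
  (∃ lam nu : Fin p → ℤ, (∀ v ∈ E, lam ≤ v) ∧ ∀ v, nu ≤ v → v ∈ E) ∧
  (∀ a ∈ E, ∀ b ∈ E, a ⊓ b ∈ E) ∧
  (∀ a ∈ E, ∀ b ∈ E, a ≠ b → ∀ i, a i = b i →
    ∃ η ∈ E, a i < η i ∧ (∀ j, min (a j) (b j) ≤ η j) ∧
      ∀ j, a j ≠ b j → η j = min (a j) (b j))

def RelMax {p : ℕ} (E : Set (Fin p → ℤ)) (α : Fin p → ℤ) : Prop :=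
  α ∈ E ∧ Delta α E = ∅ ∧ ∀ J : Finset (Fin p), 2 ≤ J.card → (DeltaJ J α E).Nonempty

def AbsMax {p : ℕ} (E : Set (Fin p → ℤ)) (β : Fin p → ℤ) : Prop :=
  β ∈ E ∧ ∀ J : Finset (Fin p), J ≠ ∅ → J ≠ Finset.univ → DeltaJ J β E = ∅

theorem stmt19 {p : ℕ} (hp : 2 ≤ p) (E : Set (Fin p → ℤ)) (hE : GoodIdeal E)
    (α : Fin p → ℤ)
    (h : ∀ J : Finset (Fin p), 2 ≤ J.card → (DeltaJ J α E).Nonempty) : α ∈ E := by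
  obtain ⟨-, hinf, -⟩ := hE
  have hp0 : 0 < p := by omega
  haveI : Nontrivial (Fin p) := Fin.nontrivial_iff_two_le.mpr hp
  have hv : ∀ i : Fin p, ∃ v ∈ E, v i = α i ∧ α ≤ v := by
    intro i
    obtain ⟨j, hj⟩ := exists_ne i
    obtain ⟨v, hvE, hveq, hvgt⟩ := h {i, j} (by rw [Finset.card_pair (Ne.symm hj)])
    refine ⟨v, hvE, hveq i (by simp), fun k => ?_⟩
    by_cases hk : k ∈ ({i, j} : Finset (Fin p))
    · exact (hveq k hk).ge
    · exact (hvgt k hk).le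
  choose w hwE hweq hwge using hv
  have hne : (Finset.univ : Finset (Fin p)).Nonempty := ⟨⟨0, hp0⟩, mem_univ _⟩
  have key : ∀ (s : Finset (Fin p)) (hs : s.Nonempty), s.inf' hs w ∈ E := by
    intro s hs
    induction hs using Finset.Nonempty.cons_induction with
    | singleton a => simpa using hwE a
    | cons a s ha hs ih => rw [Finset.inf'_cons (H := hs)]; exact hinf _ (hwE a) _ ih
  have hmain : Finset.univ.inf' hne w = α := by
    apply le_antisymm
    · intro j
      rw [Finset.inf'_apply]
      calc Finset.univ.inf' hne (fun i => w i j) ≤ w j j :=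
            Finset.inf'_le _ (mem_univ j)
        _ = α j := hweq j
    · exact Finset.le_inf' _ _ fun i _ => hwge i
  rw [← hmain]
  exact key _ hne
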